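/- Let ω = l^♭ ∧ t^♭ on ℝ^{2,n−2}, where l is lightlike, t is timelike with ⟨t,t⟩ = −1, and ⟨l,t⟩ = 0. Then the corresponding skew-adjoint operator b satisfies b³ = 0 but b² ≠ 0. -/

import Mathlib

/-- Let ω = l♭ ∧ t♭ on ℝ^{2,n−2}, where l is lightlike, t is
timelike with g(t,t) = −1 and g(l,t) = 0, and let `b` be the corresponding
skew-adjoint operator, `g(b(x),y) = ω(x,y) = g(l,x)g(t,y) − g(l,y)g(t,x)`.
Then b³ = 0 but b² ≠ 0.  Model: `V` is an n-dimensional real vector space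
with a symmetric nondegenerate bilinear form `g` of signature (2,n−2). -/
theorem type_Ib_operator_cube_zero_square_nonzero
    {V : Type*} [AddCommGroup V] [Module ℝ V] [FiniteDimensional ℝ V]
    (n : ℕ) (hn : 3 ≤ n)
    (g : V → V → ℝ) (hg_symm : ∀ x y, g x y = g y x)
    (hg_nondeg : ∀ x : V, (∀ y, g x y = 0) → x = 0)
    -- signature (2, n−2)
    (bas : Module.Basis (Fin n) ℝ V)
    (hsig : ∀ i j, g (bas i) (bas j) =
      if i = j then (if (i : ℕ) < 2 then -1 else 1) else 0)
    (l t : V)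
    (hl : g l l = 0) (hlne : l ≠ 0)
    (ht : g t t = -1) (hlt : g l t = 0)
    (b : V →ₗ[ℝ] V)
    (hb : ∀ x y, g (b x) y = g l x * g t y - g l y * g t x) :
    (∀ x, b (b (b x)) = 0) ∧ (∃ x, b (b x) ≠ 0) := by

  -- g 0 y = 0 for all y
  have key : ∀ y, g 0 y = g 0 l * g t y - g l y * g 0 t := by
    intro y
    have h := hb 0 y
    rw [map_zero] at h
    rw [h, hg_symm l 0, hg_symm t 0]
  have hA : g 0 l = 0 := by
    have h := key l
    rw [hg_symm t l, hlt, hl] at h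
    linarith
  have hB : g 0 t = 0 := by
    have h := key t
    rw [hA, ht, hlt] at h
    linarith
  have h0 : ∀ y, g 0 y = 0 := by
    intro y
    rw [key y, hA, hB]
    ring
  have glb : ∀ x, g l (b x) = 0 := by
    intro x
    rw [hg_symm l (b x), hb, hg_symm t l, hlt, hl]
    ring
  have gtb : ∀ x, g t (b x) = - g l x := by
    intro x
    rw [hg_symm t (b x), hb, ht, hlt]
    ring
  have b2 : ∀ x y, g (b (b x)) y = g l x * g l y := by
    intro x y
    rw [hb, glb, gtb]
    ring
  constructor
  · intro x
    apply hg_nondeg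
    intro y
    rw [hb, hg_symm l (b (b x)), b2 x l, hl, hg_symm t (b (b x)), b2 x t, hlt]
    ring
  · by_contra h
    push_neg at h
    apply hlne
    apply hg_nondeg
    intro y
    have h2 := b2 y y
    rw [h y, h0 y] at h2
    have : g l y = 0 := by nlinarith
    rw [hg_symm l y] at this ⊢
    exact this
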